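/- arXiv:1801.00109 — 3 statements merged into one kernel-verified Lean document; each statement's English description precedes it below -/
import Mathlib

section
/- Let F be a prime field of order p, let n ≥ 1, and let N ≥ 1 be an integer with 10·n·N ≤ p. Let A = {1, …, N}^n ⊆ F^n (identifying {1,…,N} with residues mod p) and define the Bohr-type set A* = {ξ ∈ F^n : |Σ_{x ∈ A} e(x·ξ)| ≥ |A|/10}, where e(t) = e^{2πit/p}. Then A* contains all ξ = (ξ₁, …, ξₙ) with each coordinate ξⱼ represented by an integer of absolute value at most p/(10nN); in particular |A*| ≥ c_n (p/N)^n for some constant c_n > 0 depending only on n. -/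
open Finset

noncomputable def e (p : ℕ) (t : ZMod p) : ℂ :=
  Complex.exp (2 * Real.pi * Complex.I * (t.val : ℂ) / (p : ℂ))

lemma e_intCast (p : ℕ) [NeZero p] (m : ℤ) :
    e p ((m : ZMod p)) = Complex.exp (2 * Real.pi * Complex.I * (m : ℂ) / (p : ℂ)) := by
  have hp : (p : ℂ) ≠ 0 := Nat.cast_ne_zero.2 (NeZero.ne p)
  have hv : (((m : ZMod p).val : ℤ)) = m % p := ZMod.val_intCast m
  have hm : (m : ℂ) = ((m : ZMod p).val : ℂ) + (p : ℂ) * ((m / p : ℤ) : ℂ) := by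
    have h := Int.emod_add_mul_ediv m p
    have h2 : ((m % p + (p:ℤ) * (m / p) : ℤ) : ℂ) = (m : ℂ) := by rw [h]
    push_cast at h2
    rw [← h2, ← hv]
    push_cast
    ring
  rw [e, hm]
  rw [show 2 * ↑Real.pi * Complex.I * (((m : ZMod p).val : ℂ) + (p : ℂ) * ((m / p : ℤ) : ℂ)) / (p:ℂ)
      = 2 * ↑Real.pi * Complex.I * ((m : ZMod p).val : ℂ) / (p:ℂ) + ((m / p : ℤ) : ℂ) * (2 * ↑Real.pi * Complex.I) by field_simp]
  rw [Complex.exp_add, Complex.exp_int_mul_two_pi_mul_I, mul_one]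

lemma e_natCast (p : ℕ) [NeZero p] (m : ℕ) :
    e p ((m : ZMod p)) = Complex.exp (2 * Real.pi * Complex.I * (m : ℂ) / (p : ℂ)) := by
  have := e_intCast p (m : ℤ)
  push_cast at this
  exact this

lemma e_add (p : ℕ) [NeZero p] (a b : ZMod p) : e p (a + b) = e p a * e p b := by
  have ha : ((a.val : ℕ) : ZMod p) = a := ZMod.natCast_zmod_val a
  have hb : ((b.val : ℕ) : ZMod p) = b := ZMod.natCast_zmod_val b
  have h : a + b = (((a.val + b.val : ℕ)) : ZMod p) := by push_cast [ha, hb]; ring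
  rw [h, e_natCast]
  conv_rhs => rw [← ha, ← hb, e_natCast, e_natCast]
  rw [← Complex.exp_add]
  congr 1
  push_cast
  ring

lemma e_zero (p : ℕ) [NeZero p] : e p 0 = 1 := by
  simp [e]

lemma e_sum (p : ℕ) [NeZero p] {α : Type*} (s : Finset α) (f : α → ZMod p) :
    e p (∑ a ∈ s, f a) = ∏ a ∈ s, e p (f a) := by
  classical
  induction s using Finset.induction_on with
  | empty => simp [e_zero]
  | insert _ _ h ih => rw [Finset.sum_insert h, Finset.prod_insert h, e_add, ih]

lemma norm_exp_I_sub_one_le (θ : ℝ) : ‖Complex.exp ((θ:ℂ) * Complex.I) - 1‖ ≤ |θ| := by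
  have h : Complex.exp ((θ:ℂ) * Complex.I) - 1
      = ((Real.cos θ - 1 : ℝ) : ℂ) + ((Real.sin θ : ℝ) : ℂ) * Complex.I := by
    rw [Complex.exp_mul_I]
    push_cast
    ring
  rw [h, Complex.norm_add_mul_I]
  rw [show |θ| = Real.sqrt (θ^2) by rw [Real.sqrt_sq_eq_abs]]
  apply Real.sqrt_le_sqrt
  have h1 : Real.sin (θ/2) ^ 2 ≤ (θ/2) ^ 2 := Real.sin_sq_le_sq
  have h2 : Real.cos θ = 1 - 2 * Real.sin (θ/2) ^ 2 := by
    have h5 := Real.cos_two_mul (θ/2)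
    have h3 := Real.sin_sq_add_cos_sq (θ/2)
    rw [show 2*(θ/2) = θ by ring] at h5
    nlinarith
  have h4 := Real.sin_sq_add_cos_sq θ
  nlinarith

lemma norm_e_sub_one_le (p : ℕ) [NeZero p] (m : ℤ) :
    ‖e p ((m : ZMod p)) - 1‖ ≤ 2 * Real.pi * |(m : ℝ)| / p := by
  have hp : (0:ℝ) < p := by
    have := NeZero.ne p; positivity
  rw [e_intCast]
  have h : (2 * Real.pi * Complex.I * (m : ℂ) / (p : ℂ))
      = ((2 * Real.pi * m / p : ℝ) : ℂ) * Complex.I := by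
    push_cast
    ring
  rw [h]
  calc ‖Complex.exp (((2 * Real.pi * m / p : ℝ) : ℂ) * Complex.I) - 1‖
      ≤ |2 * Real.pi * m / p| := norm_exp_I_sub_one_le _
    _ = 2 * Real.pi * |(m:ℝ)| / p := by
        rw [abs_div, abs_mul, abs_mul]
        rw [abs_of_nonneg (by norm_num : (0:ℝ) ≤ 2), abs_of_nonneg Real.pi_pos.le,
          abs_of_nonneg hp.le]

/-- `A = {1, …, N}^n ⊆ F^n`, identifying `{1,…,N}` with residues mod `p`. -/
def cubeA (p n N : ℕ) : Finset (Fin n → ZMod p) :=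
  Fintype.piFinset fun _ => (Finset.Icc 1 N).image (fun k : ℕ => (k : ZMod p))

/-- The Bohr-type set `A* = {ξ : |Σ_{x∈A} e(x·ξ)| ≥ |A|/10}`. -/
noncomputable def bohr (p n N : ℕ) [NeZero p] : Finset (Fin n → ZMod p) :=
  Finset.univ.filter fun ξ =>
    ((cubeA p n N).card : ℝ) / 10 ≤ ‖∑ x ∈ cubeA p n N, e p (∑ i, x i * ξ i)‖

/-- The Bohr set `A*` contains all `ξ` whose coordinates have representatives of
absolute value at most `p/(10nN)`; in particular `|A*| ≥ c_n (p/N)^n` for a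
constant `c_n > 0` depending only on `n`. -/
theorem bohr_lower_bound (n : ℕ) (hn : 1 ≤ n) :
    ∃ c : ℝ, 0 < c ∧
      ∀ (p N : ℕ) [Fact p.Prime], 1 ≤ N → 10 * n * N ≤ p →
        (∀ ξ : Fin n → ZMod p,
            (∀ j, |((ξ j).valMinAbs : ℝ)| ≤ (p : ℝ) / (10 * n * N)) →
            ξ ∈ bohr p n N) ∧
        c * ((p : ℝ) / N) ^ n ≤ ((bohr p n N).card : ℝ) := by
  have hn0 : (0:ℝ) < n := by exact_mod_cast hn
  refine ⟨(1 / (10 * n) : ℝ) ^ n, by positivity, ?_⟩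
  intro p N hPrime hN hpN
  have hp : p.Prime := hPrime.out
  have hN0 : (0:ℝ) < N := by exact_mod_cast hN
  have hp0 : (0:ℝ) < p := by exact_mod_cast hp.pos
  have hNp : N < p := by nlinarith [hn, hN, hpN]
  have hn1 : (1:ℝ) ≤ n := by exact_mod_cast hn
  have hN1 : (1:ℝ) ≤ N := by exact_mod_cast hN
  -- injectivity of the cast on [1, N]
  have hinj : Set.InjOn (fun k : ℕ => (k : ZMod p)) (Finset.Icc 1 N) := by
    intro a ha b hb hab
    simp only [Finset.coe_Icc, Set.mem_Icc] at ha hb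
    have hv : (a : ZMod p).val = (b : ZMod p).val := by
      simp only at hab; rw [hab]
    rwa [ZMod.val_cast_of_lt (lt_of_le_of_lt ha.2 hNp),
      ZMod.val_cast_of_lt (lt_of_le_of_lt hb.2 hNp)] at hv
  have hcard : (cubeA p n N).card = N ^ n := by
    rw [cubeA, Fintype.card_piFinset]
    simp [Finset.card_image_of_injOn hinj, Nat.card_Icc]
  set M : ℝ := (p : ℝ) / (10 * n * N) with hM
  have hM0 : 0 < M := by positivity
  -- membership statement
  have hmem : ∀ ξ : Fin n → ZMod p,
      (∀ j, |((ξ j).valMinAbs : ℝ)| ≤ M) → ξ ∈ bohr p n N := by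
    intro ξ hξ
    set δ : ℝ := Real.pi / (5 * n) with hδ
    have hδpos : 0 < δ := by positivity
    have hδ1 : δ ≤ Real.pi / 5 := by
      rw [hδ]
      apply div_le_div_of_nonneg_left Real.pi_pos.le (by norm_num)
      nlinarith [hn1]
    have hδ45 : δ ≤ 4/5 := hδ1.trans (by linarith [Real.pi_le_four])
    -- factorization
    have hfact : ∑ x ∈ cubeA p n N, e p (∑ i, x i * ξ i)
        = ∏ i : Fin n, ∑ k ∈ Finset.Icc 1 N, e p ((k : ZMod p) * ξ i) := by
      rw [cubeA]
      rw [Finset.sum_congr rfl (fun x _ => e_sum p Finset.univ (fun i => x i * ξ i))]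
      rw [← Finset.prod_univ_sum (fun _ : Fin n => (Finset.Icc 1 N).image (fun k : ℕ => (k : ZMod p)))
        (fun i t => e p (t * ξ i))]
      refine Finset.prod_congr rfl fun i _ => ?_
      rw [Finset.sum_image (fun a ha b hb hab => hinj (by simpa using ha) (by simpa using hb) hab)]
    -- lower bound for each factor
    have hlow : ∀ i : Fin n,
        (N:ℝ) * (1 - δ) ≤ ‖∑ k ∈ Finset.Icc 1 N, e p ((k : ZMod p) * ξ i)‖ := by
      intro i
      have hterm : ∀ k ∈ Finset.Icc 1 N, ‖e p ((k : ZMod p) * ξ i) - 1‖ ≤ δ := by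
        intro k hk
        obtain ⟨hk1, hk2⟩ := Finset.mem_Icc.1 hk
        have heq : (k : ZMod p) * ξ i = (((k : ℤ) * (ξ i).valMinAbs : ℤ) : ZMod p) := by
          push_cast [ZMod.coe_valMinAbs]
          ring
        rw [heq]
        refine (norm_e_sub_one_le p _).trans ?_
        have habs : |(((k : ℤ) * (ξ i).valMinAbs : ℤ) : ℝ)| ≤ N * M := by
          push_cast
          rw [abs_mul]
          have h1 : |(k:ℝ)| ≤ N := by
            rw [abs_of_nonneg (by positivity)]
            exact_mod_cast hk2
          exact mul_le_mul h1 (hξ i) (abs_nonneg _) hN0.le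
        calc 2 * Real.pi * |(((k : ℤ) * (ξ i).valMinAbs : ℤ) : ℝ)| / p
            ≤ 2 * Real.pi * ((N:ℝ) * M) / p := by gcongr
          _ = δ := by
              rw [hδ, hM]
              field_simp
              ring
      have hsub : ‖(∑ k ∈ Finset.Icc 1 N, e p ((k : ZMod p) * ξ i)) - (N:ℂ)‖ ≤ N * δ := by
        have hNc : (N:ℂ) = ∑ _k ∈ Finset.Icc 1 N, (1:ℂ) := by
          simp [Nat.card_Icc]
        rw [hNc, ← Finset.sum_sub_distrib]
        refine (norm_sum_le _ _).trans ?_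
        calc ∑ k ∈ Finset.Icc 1 N, ‖e p ((k : ZMod p) * ξ i) - 1‖
            ≤ ∑ _k ∈ Finset.Icc 1 N, δ := Finset.sum_le_sum hterm
          _ = N * δ := by simp [Finset.sum_const, Nat.card_Icc, nsmul_eq_mul]
      have htri := norm_sub_norm_le ((N:ℂ)) (∑ k ∈ Finset.Icc 1 N, e p ((k : ZMod p) * ξ i))
      rw [norm_sub_rev] at htri
      have hNnorm : ‖(N:ℂ)‖ = N := by
        simp
      nlinarith [norm_nonneg (∑ k ∈ Finset.Icc 1 N, e p ((k : ZMod p) * ξ i))]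
    -- combine
    rw [bohr, Finset.mem_filter]
    refine ⟨Finset.mem_univ _, ?_⟩
    rw [hfact, hcard, norm_prod]
    have h1δ : (0:ℝ) ≤ (N:ℝ) * (1 - δ) := by nlinarith
    have hprod : ((N:ℝ) * (1 - δ)) ^ n ≤ ∏ i : Fin n, ‖∑ k ∈ Finset.Icc 1 N, e p ((k : ZMod p) * ξ i)‖ := by
      calc ((N:ℝ) * (1 - δ)) ^ n
          = ∏ _i : Fin n, ((N:ℝ) * (1 - δ)) := by
            simp [Finset.prod_const]
        _ ≤ ∏ i : Fin n, ‖∑ k ∈ Finset.Icc 1 N, e p ((k : ZMod p) * ξ i)‖ :=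
            Finset.prod_le_prod (fun _ _ => h1δ) (fun i _ => hlow i)
    have hpow : ((N:ℝ))^n * (1 - Real.pi/5) ≤ ((N:ℝ) * (1 - δ))^n := by
      rw [mul_pow]
      have h2 : 1 - Real.pi/5 ≤ (1 - δ)^n := by
        have hber := one_add_mul_le_pow (a := -δ) (by linarith : (-2:ℝ) ≤ -δ) n
        have hnδ : (n:ℝ) * δ = Real.pi/5 := by
          rw [hδ]; field_simp
        calc 1 - Real.pi/5 = 1 + (n:ℝ) * (-δ) := by rw [mul_neg, hnδ]; ring
          _ ≤ (1 + -δ)^n := hber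
          _ = (1 - δ)^n := by ring_nf
      exact mul_le_mul_of_nonneg_left h2 (by positivity)
    have hfin : ((N:ℝ))^n / 10 ≤ ((N:ℝ))^n * (1 - Real.pi/5) := by
      nlinarith [Real.pi_le_four, pow_pos hN0 n]
    calc ((N ^ n : ℕ) : ℝ) / 10 = ((N:ℝ))^n / 10 := by push_cast; ring
      _ ≤ ((N:ℝ))^n * (1 - Real.pi/5) := hfin
      _ ≤ ((N:ℝ) * (1 - δ))^n := hpow
      _ ≤ _ := hprod
  refine ⟨hmem, ?_⟩
  -- cardinality lower bound
  set K : ℕ := Nat.floor M + 1 with hK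
  have hKM : M ≤ (K:ℝ) := by
    rw [hK]
    push_cast
    exact (Nat.lt_floor_add_one M).le
  have hMp10 : M ≤ (p:ℝ)/10 := by
    rw [hM]
    apply div_le_div_of_nonneg_left hp0.le (by norm_num)
    nlinarith [hn1, hN1]
  have hhalf : Nat.floor M ≤ p / 2 := by
    rw [Nat.le_div_iff_mul_le (by norm_num)]
    have h1 : ((Nat.floor M : ℕ) : ℝ) * 2 ≤ (p:ℝ) := by
      have := Nat.floor_le hM0.le
      nlinarith
    exact_mod_cast h1
  have hKp : K ≤ p := by
    have : p / 2 + 1 ≤ p := by omega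
    omega
  set f : (Fin n → Fin K) → (Fin n → ZMod p) := fun v j => ((v j : ℕ) : ZMod p) with hf
  have hmaps : ∀ v : Fin n → Fin K, f v ∈ bohr p n N := by
    intro v
    apply hmem
    intro j
    have hvj : (v j : ℕ) ≤ Nat.floor M := by
      have := (v j).isLt
      omega
    have hval : ((((v j : ℕ)) : ZMod p)).valMinAbs = ((v j : ℕ) : ℤ) :=
      ZMod.valMinAbs_natCast_of_le_half (le_trans hvj hhalf)
    rw [hf]
    simp only
    rw [hval]
    push_cast
    rw [abs_of_nonneg (by positivity)]
    exact le_trans (by exact_mod_cast hvj) (Nat.floor_le hM0.le)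
  have hFinj : Function.Injective f := by
    intro v w hvw
    funext j
    have h1 := congrFun hvw j
    simp only [hf] at h1
    have h2 : ((v j : ℕ) : ZMod p).val = ((w j : ℕ) : ZMod p).val := by rw [h1]
    rw [ZMod.val_cast_of_lt (lt_of_lt_of_le (v j).isLt hKp),
      ZMod.val_cast_of_lt (lt_of_lt_of_le (w j).isLt hKp)] at h2
    exact Fin.ext h2
  have hcardB : K ^ n ≤ (bohr p n N).card := by
    have h := Finset.card_le_card_of_injOn (s := (Finset.univ : Finset (Fin n → Fin K)))
      (t := bohr p n N) f (fun v _ => hmaps v) (hFinj.injOn)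
    simpa using h
  have hceq : (1 / (10 * (n:ℝ))) ^ n * ((p : ℝ) / N) ^ n = M ^ n := by
    rw [← mul_pow, hM]
    congr 1
    field_simp
  calc (1 / (10 * (n:ℝ))) ^ n * ((p : ℝ) / N) ^ n = M ^ n := hceq
    _ ≤ (K:ℝ) ^ n := pow_le_pow_left₀ hM0.le hKM n
    _ ≤ ((bohr p n N).card : ℝ) := by exact_mod_cast hcardB
end

section
/- Let F be a prime field of order p and μ a probability measure on F^n with |μ̂(ξ)| ≤ C·p^{−β/2} for all ξ ≠ 0, where 0 < β < n. Then for every q ≥ 4n/β and every f : F^n → ℂ, ‖(fμ)^∧‖_{L^q(F^n)} ≤ C'·‖f‖_{L²(μ)}, where C' is independent of p. -/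
open Finset

lemma norm_e (p : ℕ) [NeZero p] (t : ZMod p) : ‖e p t‖ = 1 := by
  have : 2 * Real.pi * Complex.I * (t.val : ℂ) / (p : ℂ)
      = ((2 * Real.pi * t.val / p : ℝ) : ℂ) * Complex.I := by
    push_cast; ring
  rw [e, this]
  exact Complex.norm_exp_ofReal_mul_I _

lemma conj_e (p : ℕ) [NeZero p] (t : ZMod p) :
    (starRingEnd ℂ) (e p t) = e p (-t) := by
  have h1 : e p t * e p (-t) = 1 := by
    rw [← e_add, add_neg_cancel, e_zero]
  have h2 : e p t * (starRingEnd ℂ) (e p t) = 1 := by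
    rw [Complex.mul_conj]
    norm_cast
    rw [← Complex.sq_norm, norm_e]
    norm_num
  rw [← inv_eq_of_mul_eq_one_right h2, ← inv_eq_of_mul_eq_one_right h1]

noncomputable def dft {p n : ℕ} [NeZero p] (f : (Fin n → ZMod p) → ℂ)
    (ξ : Fin n → ZMod p) : ℂ :=
  ∑ x : Fin n → ZMod p, e p (-(∑ i, x i * ξ i)) * f x

/-- Restriction estimate from Fourier decay alone: if `|μ̂(ξ)| ≤ C p^{-β/2}`
for `ξ ≠ 0`, then for every `q ≥ 4n/β` one has `‖(fμ)^∧‖_q ≤ C' ‖f‖_{L²(μ)}`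
with `C'` independent of `p`. -/
theorem restriction_from_decay (n : ℕ) (β C q : ℝ)
    (hβ0 : 0 < β) (hβn : β < n) (hC : 0 < C)
    (hq : 4 * n / β ≤ q) :
    ∃ C' : ℝ, 0 < C' ∧
      ∀ (p : ℕ) [Fact p.Prime] (μ : (Fin n → ZMod p) → ℝ),
        (∀ x, 0 ≤ μ x) → (∑ x, μ x) = 1 →
        (∀ ξ, ξ ≠ 0 → ‖dft (fun x => (μ x : ℂ)) ξ‖ ≤ C * (p : ℝ) ^ (-β / 2)) →
        ∀ f : (Fin n → ZMod p) → ℂ,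
          (∑ ξ : Fin n → ZMod p, ‖dft (fun x => f x * μ x) ξ‖ ^ q) ^ (1 / q)
            ≤ C' * (∑ x : Fin n → ZMod p, ‖f x‖ ^ 2 * μ x) ^ ((1 : ℝ) / 2) := by
  have hn0 : (0:ℝ) < n := lt_trans hβ0 hβn
  have hq4 : 4 < q := lt_of_lt_of_le (by rw [lt_div_iff₀ hβ0]; linarith) hq
  have hq0 : (0:ℝ) < q := by linarith
  have hqne : q ≠ 0 := ne_of_gt hq0
  have hq1ne : q - 1 ≠ 0 := by intro hh; linarith
  refine ⟨Real.sqrt (1 + C), Real.sqrt_pos.mpr (by linarith), ?_⟩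
  intro p hp μ hμ0 hμ1 hdec f
  have hp1R : (1:ℝ) ≤ p := by exact_mod_cast hp.out.one_lt.le
  have hp0R : (0:ℝ) < p := by linarith
  set g : (Fin n → ZMod p) → ℂ := dft (fun x => f x * ((μ x : ℝ) : ℂ)) with hgdef
  set F : ℝ := ∑ x, ‖f x‖ ^ 2 * μ x with hFdef
  set S : ℝ := ∑ ξ, ‖g ξ‖ ^ q with hSdef
  have hF0 : 0 ≤ F := by
    rw [hFdef]; exact sum_nonneg fun x _ => mul_nonneg (by positivity) (hμ0 x)
  have hS0 : 0 ≤ S := by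
    rw [hSdef]; exact sum_nonneg fun ξ _ => Real.rpow_nonneg (norm_nonneg _) q
  set h : (Fin n → ZMod p) → ℂ := fun ξ => ((‖g ξ‖ ^ (q-2) : ℝ) : ℂ) * g ξ with hhdef
  set H : (Fin n → ZMod p) → ℂ := fun x => ∑ ξ, h ξ * e p (∑ i, x i * ξ i) with hHdef
  set G : ℝ := ∑ x, ‖H x‖ ^ 2 * μ x with hGdef
  have hG0 : 0 ≤ G := by
    rw [hGdef]; exact sum_nonneg fun x _ => mul_nonneg (by positivity) (hμ0 x)
  have hnormh : ∀ ξ, ‖h ξ‖ = ‖g ξ‖ ^ (q-1) := by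
    intro ξ
    rw [hhdef]
    simp only
    rw [norm_mul, Complex.norm_real, Real.norm_eq_abs,
      abs_of_nonneg (Real.rpow_nonneg (norm_nonneg _) _),
      show q - 1 = (q-2) + 1 by ring,
      Real.rpow_add' (norm_nonneg _) (by intro hh; linarith), Real.rpow_one]
  -- pointwise identity
  have hptwise : ∀ ξ, ((‖g ξ‖ ^ q : ℝ) : ℂ) = (starRingEnd ℂ) (h ξ) * g ξ := by
    intro ξ
    rw [hhdef]
    simp only [map_mul, Complex.conj_ofReal]
    have hzz : (starRingEnd ℂ) (g ξ) * g ξ = ((‖g ξ‖ ^ 2 : ℝ) : ℂ) := by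
      rw [mul_comm, Complex.mul_conj]
      norm_cast
      rw [← Complex.sq_norm]
    rw [mul_assoc, hzz, ← Complex.ofReal_mul]
    congr 1
    rw [← Real.rpow_natCast ‖g ξ‖ 2,
      ← Real.rpow_add' (norm_nonneg _) (by push_cast; intro hh; linarith)]
    congr 1
    push_cast
    ring
  -- key identity 1
  have key1 : ((S : ℝ) : ℂ) = ∑ x, (f x * ((μ x : ℝ) : ℂ)) * (starRingEnd ℂ) (H x) := by
    rw [hSdef, Complex.ofReal_sum]
    calc (∑ ξ, ((‖g ξ‖ ^ q : ℝ) : ℂ))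
        = ∑ ξ, (starRingEnd ℂ) (h ξ) * g ξ := sum_congr rfl fun ξ _ => hptwise ξ
      _ = ∑ ξ, ∑ x, (starRingEnd ℂ) (h ξ)
            * (e p (-(∑ i, x i * ξ i)) * (f x * ((μ x : ℝ) : ℂ))) := by
          refine sum_congr rfl fun ξ _ => ?_
          rw [hgdef]
          show (starRingEnd ℂ) (h ξ) * dft (fun x => f x * ((μ x : ℝ) : ℂ)) ξ = _
          rw [dft, Finset.mul_sum]
      _ = ∑ x, ∑ ξ, (starRingEnd ℂ) (h ξ)
            * (e p (-(∑ i, x i * ξ i)) * (f x * ((μ x : ℝ) : ℂ))) := Finset.sum_comm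
      _ = ∑ x, (f x * ((μ x : ℝ) : ℂ)) * (starRingEnd ℂ) (H x) := by
          refine sum_congr rfl fun x _ => ?_
          rw [hHdef]
          simp only [map_sum, map_mul, conj_e]
          rw [Finset.mul_sum]
          exact sum_congr rfl fun ξ _ => by ring
  -- Cauchy-Schwarz step
  have step2 : S ^ 2 ≤ F * G := by
    have hSle : S ≤ ∑ x, (‖f x‖ * Real.sqrt (μ x)) * (‖H x‖ * Real.sqrt (μ x)) := by
      calc S = ‖((S : ℝ) : ℂ)‖ := by
            rw [Complex.norm_real, Real.norm_eq_abs, abs_of_nonneg hS0]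
        _ = ‖∑ x, (f x * ((μ x : ℝ) : ℂ)) * (starRingEnd ℂ) (H x)‖ := by rw [key1]
        _ ≤ ∑ x, ‖(f x * ((μ x : ℝ) : ℂ)) * (starRingEnd ℂ) (H x)‖ := norm_sum_le _ _
        _ = ∑ x, (‖f x‖ * Real.sqrt (μ x)) * (‖H x‖ * Real.sqrt (μ x)) := by
            refine sum_congr rfl fun x _ => ?_
            rw [norm_mul, norm_mul, RCLike.norm_conj, Complex.norm_real, Real.norm_eq_abs,
              abs_of_nonneg (hμ0 x)]
            have hs : Real.sqrt (μ x) ^ 2 = μ x := Real.sq_sqrt (hμ0 x)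
            linear_combination (-(‖f x‖ * ‖H x‖)) * hs
    have CS := Finset.sum_mul_sq_le_sq_mul_sq univ
      (fun x => ‖f x‖ * Real.sqrt (μ x)) (fun x => ‖H x‖ * Real.sqrt (μ x))
    calc S ^ 2 ≤ (∑ x, (‖f x‖ * Real.sqrt (μ x)) * (‖H x‖ * Real.sqrt (μ x))) ^ 2 :=
          pow_le_pow_left₀ hS0 hSle 2
      _ ≤ (∑ x, (‖f x‖ * Real.sqrt (μ x)) ^ 2) * (∑ x, (‖H x‖ * Real.sqrt (μ x)) ^ 2) := CS
      _ = F * G := by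
          rw [hFdef, hGdef]
          congr 1 <;> exact sum_congr rfl fun x _ => by rw [mul_pow, Real.sq_sqrt (hμ0 x)]
  -- key identity 3
  have key3 : ((G : ℝ) : ℂ)
      = ∑ ξ, ∑ η, (h ξ * (starRingEnd ℂ) (h η)) * dft (fun x => ((μ x : ℝ) : ℂ)) (η - ξ) := by
    rw [hGdef, Complex.ofReal_sum]
    calc (∑ x, ((‖H x‖ ^ 2 * μ x : ℝ) : ℂ))
        = ∑ x, (H x * (starRingEnd ℂ) (H x)) * ((μ x : ℝ) : ℂ) := by
          refine sum_congr rfl fun x _ => ?_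
          have hns : Complex.normSq (H x) = ‖H x‖ ^ 2 := by
            rw [← Complex.sq_norm]
          rw [Complex.mul_conj, hns, ← Complex.ofReal_mul]
      _ = ∑ x, (∑ ξ, ∑ η, (h ξ * (starRingEnd ℂ) (h η))
            * (e p (∑ i, x i * ξ i) * e p (-(∑ i, x i * η i)))) * ((μ x : ℝ) : ℂ) := by
          refine sum_congr rfl fun x _ => ?_
          congr 1
          rw [hHdef]
          simp only [map_sum, map_mul, conj_e]
          rw [Finset.sum_mul_sum]
          exact sum_congr rfl fun ξ _ => sum_congr rfl fun η _ => by ring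
      _ = ∑ x, ∑ ξ, ∑ η, (h ξ * (starRingEnd ℂ) (h η))
            * (e p (∑ i, x i * ξ i) * e p (-(∑ i, x i * η i))) * ((μ x : ℝ) : ℂ) := by
          refine sum_congr rfl fun x _ => ?_
          rw [Finset.sum_mul]
          exact sum_congr rfl fun ξ _ => Finset.sum_mul _ _ _
      _ = ∑ ξ, ∑ x, ∑ η, (h ξ * (starRingEnd ℂ) (h η))
            * (e p (∑ i, x i * ξ i) * e p (-(∑ i, x i * η i))) * ((μ x : ℝ) : ℂ) :=
          Finset.sum_comm
      _ = ∑ ξ, ∑ η, ∑ x, (h ξ * (starRingEnd ℂ) (h η))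
            * (e p (∑ i, x i * ξ i) * e p (-(∑ i, x i * η i))) * ((μ x : ℝ) : ℂ) :=
          sum_congr rfl fun ξ _ => Finset.sum_comm
      _ = ∑ ξ, ∑ η, (h ξ * (starRingEnd ℂ) (h η)) * dft (fun x => ((μ x : ℝ) : ℂ)) (η - ξ) := by
          refine sum_congr rfl fun ξ _ => sum_congr rfl fun η _ => ?_
          rw [dft, Finset.mul_sum]
          refine sum_congr rfl fun x _ => ?_
          rw [← e_add]
          have harg : (∑ i, x i * ξ i) + -(∑ i, x i * η i) = -(∑ i, x i * (η - ξ) i) := by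
            simp only [Pi.sub_apply, mul_sub]
            rw [Finset.sum_sub_distrib]
            ring
          rw [harg]
          ring
  have hdft0 : dft (fun x => ((μ x : ℝ) : ℂ)) 0 = 1 := by
    rw [dft]
    simp only [Pi.zero_apply, mul_zero, Finset.sum_const_zero, neg_zero, e_zero, one_mul]
    rw [← Complex.ofReal_sum, hμ1, Complex.ofReal_one]
  -- step 3 : bound G
  have step3 : G ≤ (∑ ξ, ‖g ξ‖ ^ (2*q-2))
      + C * (p:ℝ) ^ (-β/2) * (∑ ξ, ‖g ξ‖ ^ (q-1)) ^ 2 := by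
    calc G = ‖((G : ℝ) : ℂ)‖ := by
          rw [Complex.norm_real, Real.norm_eq_abs, abs_of_nonneg hG0]
      _ = ‖∑ ξ, ∑ η, (h ξ * (starRingEnd ℂ) (h η)) * dft (fun x => ((μ x : ℝ) : ℂ)) (η - ξ)‖ := by
          rw [key3]
      _ ≤ ∑ ξ, ‖∑ η, (h ξ * (starRingEnd ℂ) (h η)) * dft (fun x => ((μ x : ℝ) : ℂ)) (η - ξ)‖ :=
          norm_sum_le _ _
      _ ≤ ∑ ξ, ∑ η, ‖(h ξ * (starRingEnd ℂ) (h η)) * dft (fun x => ((μ x : ℝ) : ℂ)) (η - ξ)‖ :=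
          sum_le_sum fun ξ _ => norm_sum_le _ _
      _ ≤ ∑ ξ, ∑ η, ((if η = ξ then ‖g ξ‖ ^ (2*q-2) else 0)
            + ‖g ξ‖ ^ (q-1) * ‖g η‖ ^ (q-1) * (C * (p:ℝ) ^ (-β/2))) := by
          refine sum_le_sum fun ξ _ => sum_le_sum fun η _ => ?_
          rw [norm_mul, norm_mul, RCLike.norm_conj, hnormh, hnormh]
          by_cases hcase : η = ξ
          · subst hcase
            rw [if_pos rfl, sub_self, hdft0, norm_one, mul_one]
            have hmerge : ‖g η‖ ^ (q-1) * ‖g η‖ ^ (q-1) = ‖g η‖ ^ (2*q-2) := by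
              rw [← Real.rpow_add' (norm_nonneg _) (by intro hh; linarith)]
              congr 1; ring
            rw [hmerge]
            have h0 : (0:ℝ) ≤ ‖g η‖ ^ (2*q-2) * (C * (p:ℝ) ^ (-β/2)) := by
              have := Real.rpow_nonneg (norm_nonneg (g η)) (2*q-2)
              positivity
            linarith
          · rw [if_neg hcase, zero_add]
            have hb := hdec (η - ξ) (sub_ne_zero.mpr hcase)
            refine mul_le_mul_of_nonneg_left hb ?_
            exact mul_nonneg (Real.rpow_nonneg (norm_nonneg _) _)
              (Real.rpow_nonneg (norm_nonneg _) _)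
      _ = (∑ ξ, ‖g ξ‖ ^ (2*q-2)) + C * (p:ℝ) ^ (-β/2) * (∑ ξ, ‖g ξ‖ ^ (q-1)) ^ 2 := by
          simp only [Finset.sum_add_distrib]
          congr 1
          · refine sum_congr rfl fun ξ _ => ?_
            simp
          · calc ∑ ξ, ∑ η, ‖g ξ‖ ^ (q-1) * ‖g η‖ ^ (q-1) * (C * (p:ℝ) ^ (-β/2))
                = ∑ ξ, ∑ η, (C * (p:ℝ) ^ (-β/2)) * (‖g ξ‖ ^ (q-1) * ‖g η‖ ^ (q-1)) :=
                  sum_congr rfl fun ξ _ => sum_congr rfl fun η _ => by ring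
              _ = (C * (p:ℝ) ^ (-β/2)) * ∑ ξ, ∑ η, ‖g ξ‖ ^ (q-1) * ‖g η‖ ^ (q-1) := by
                  rw [Finset.mul_sum]
                  exact sum_congr rfl fun ξ _ => (Finset.mul_sum _ _ _).symm
              _ = (C * (p:ℝ) ^ (-β/2)) * ((∑ ξ, ‖g ξ‖ ^ (q-1)) * (∑ η, ‖g η‖ ^ (q-1))) := by
                  rw [Finset.sum_mul_sum]
              _ = C * (p:ℝ) ^ (-β/2) * (∑ ξ, ‖g ξ‖ ^ (q-1)) ^ 2 := by
                  rw [sq]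
  -- step 4a
  have h4a : (∑ ξ, ‖g ξ‖ ^ (2*q-2)) ≤ S ^ ((2*q-2)/q) := by
    have hstep : ∀ ξ : Fin n → ZMod p, ‖g ξ‖ ^ (2*q-2) ≤ ‖g ξ‖ ^ q * S ^ ((q-2)/q) := by
      intro ξ
      have h1 : ‖g ξ‖ ^ (2*q-2) = ‖g ξ‖ ^ q * ‖g ξ‖ ^ (q-2) := by
        rw [← Real.rpow_add' (norm_nonneg _) (by intro hh; linarith)]
        congr 1; ring
      have h2 : ‖g ξ‖ ^ (q-2) = (‖g ξ‖ ^ q) ^ ((q-2)/q) := by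
        rw [← Real.rpow_mul (norm_nonneg _)]
        congr 1
        field_simp
      have h3 : (‖g ξ‖ ^ q) ^ ((q-2)/q) ≤ S ^ ((q-2)/q) := by
        apply Real.rpow_le_rpow (Real.rpow_nonneg (norm_nonneg _) _)
        · rw [hSdef]
          exact Finset.single_le_sum (fun i _ => Real.rpow_nonneg (norm_nonneg _) _)
            (mem_univ ξ)
        · exact div_nonneg (by linarith) hq0.le
      rw [h1, h2]
      exact mul_le_mul_of_nonneg_left h3 (Real.rpow_nonneg (norm_nonneg _) _)
    calc (∑ ξ, ‖g ξ‖ ^ (2*q-2)) ≤ ∑ ξ, ‖g ξ‖ ^ q * S ^ ((q-2)/q) :=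
          sum_le_sum fun ξ _ => hstep ξ
      _ = S * S ^ ((q-2)/q) := by rw [← Finset.sum_mul, ← hSdef]
      _ = S ^ ((2*q-2)/q) := by
          have hne : 1 + (q-2)/q ≠ 0 := by
            have : 0 < (q-2)/q := div_pos (by linarith) hq0
            intro hh; linarith
          rw [show (2*q-2)/q = 1 + (q-2)/q by field_simp; ring,
            Real.rpow_add' hS0 hne, Real.rpow_one]
  -- step 4b : Hölder
  have h4b : (∑ ξ, ‖g ξ‖ ^ (q-1))
      ≤ ((Fintype.card (Fin n → ZMod p) : ℝ)) ^ (1/q) * S ^ ((q-1)/q) := by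
    have hp1 : 1 ≤ q / (q-1) := by
      rw [le_div_iff₀ (by linarith : (0:ℝ) < q - 1)]; linarith
    have hH := Real.inner_le_weight_mul_Lp_of_nonneg (univ : Finset (Fin n → ZMod p)) hp1
      (fun _ => 1) (fun ξ => ‖g ξ‖ ^ (q-1)) (fun _ => zero_le_one)
      (fun ξ => Real.rpow_nonneg (norm_nonneg _) _)
    simp only [one_mul] at hH
    rw [Finset.sum_const, card_univ, nsmul_eq_mul, mul_one] at hH
    have e1 : 1 - (q/(q-1))⁻¹ = 1/q := by
      rw [inv_div]
      field_simp
      ring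
    have e2 : ((q/(q-1))⁻¹ : ℝ) = (q-1)/q := inv_div _ _
    have e3 : ∀ ξ : Fin n → ZMod p, (‖g ξ‖ ^ (q-1)) ^ (q/(q-1)) = ‖g ξ‖ ^ q := by
      intro ξ
      rw [← Real.rpow_mul (norm_nonneg _)]
      congr 1
      field_simp
    rw [e1, e2] at hH
    simp only [e3] at hH
    rw [← hSdef] at hH
    exact hH
  have hNcast : ((Fintype.card (Fin n → ZMod p) : ℝ)) = (p:ℝ) ^ (n:ℝ) := by
    have hcard : Fintype.card (Fin n → ZMod p) = p ^ n := by
      simp [Fintype.card_fun, ZMod.card]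
    rw [hcard, Nat.cast_pow, ← Real.rpow_natCast]
  have hT0 : 0 ≤ ∑ ξ, ‖g ξ‖ ^ (q-1) :=
    sum_nonneg fun ξ _ => Real.rpow_nonneg (norm_nonneg _) _
  have hNS : (∑ ξ, ‖g ξ‖ ^ (q-1)) ^ 2 ≤ (p:ℝ) ^ (2*(n:ℝ)/q) * S ^ ((2*q-2)/q) := by
    calc (∑ ξ, ‖g ξ‖ ^ (q-1)) ^ 2
        ≤ (((Fintype.card (Fin n → ZMod p) : ℝ)) ^ (1/q) * S ^ ((q-1)/q)) ^ 2 :=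
          pow_le_pow_left₀ hT0 h4b 2
      _ = (p:ℝ) ^ (2*(n:ℝ)/q) * S ^ ((2*q-2)/q) := by
          rw [mul_pow, hNcast]
          rw [← Real.rpow_natCast (((p:ℝ) ^ (n:ℝ)) ^ (1/q)) 2,
            ← Real.rpow_natCast (S ^ ((q-1)/q)) 2,
            ← Real.rpow_mul (Real.rpow_nonneg hp0R.le _), ← Real.rpow_mul hp0R.le,
            ← Real.rpow_mul hS0]
          congr 1 <;> push_cast <;> ring
  have hfinal2 : C * (p:ℝ) ^ (-β/2) * (∑ ξ, ‖g ξ‖ ^ (q-1)) ^ 2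
      ≤ C * S ^ ((2*q-2)/q) := by
    have h1 : (p:ℝ) ^ (-β/2) * (p:ℝ) ^ (2*(n:ℝ)/q) ≤ 1 := by
      rw [← Real.rpow_add hp0R]
      apply Real.rpow_le_one_of_one_le_of_nonpos hp1R
      have h2 : 4*(n:ℝ) ≤ β * q := by
        rw [div_le_iff₀ hβ0] at hq; linarith
      have h3 : 2*(n:ℝ)/q ≤ β/2 := by
        rw [div_le_iff₀ hq0]; nlinarith
      linarith
    calc C * (p:ℝ) ^ (-β/2) * (∑ ξ, ‖g ξ‖ ^ (q-1)) ^ 2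
        ≤ C * (p:ℝ) ^ (-β/2) * ((p:ℝ) ^ (2*(n:ℝ)/q) * S ^ ((2*q-2)/q)) := by
          refine mul_le_mul_of_nonneg_left hNS ?_
          exact mul_nonneg hC.le (Real.rpow_nonneg hp0R.le _)
      _ = C * ((p:ℝ) ^ (-β/2) * (p:ℝ) ^ (2*(n:ℝ)/q)) * S ^ ((2*q-2)/q) := by ring
      _ ≤ C * 1 * S ^ ((2*q-2)/q) := by
          refine mul_le_mul_of_nonneg_right ?_ (Real.rpow_nonneg hS0 _)
          exact mul_le_mul_of_nonneg_left h1 hC.le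
      _ = C * S ^ ((2*q-2)/q) := by ring
  have hG2 : G ≤ (1+C) * S ^ ((2*q-2)/q) := by
    calc G ≤ (∑ ξ, ‖g ξ‖ ^ (2*q-2))
          + C * (p:ℝ) ^ (-β/2) * (∑ ξ, ‖g ξ‖ ^ (q-1)) ^ 2 := step3
      _ ≤ S ^ ((2*q-2)/q) + C * S ^ ((2*q-2)/q) := add_le_add h4a hfinal2
      _ = (1+C) * S ^ ((2*q-2)/q) := by ring
  have hfin : S ^ 2 ≤ (1+C) * F * S ^ ((2*q-2)/q) := by
    calc S ^ 2 ≤ F * G := step2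
      _ ≤ F * ((1+C) * S ^ ((2*q-2)/q)) := mul_le_mul_of_nonneg_left hG2 hF0
      _ = (1+C) * F * S ^ ((2*q-2)/q) := by ring
  by_cases hScase : S = 0
  · rw [hScase, Real.zero_rpow (one_div_ne_zero hqne)]
    exact mul_nonneg (Real.sqrt_nonneg _) (Real.rpow_nonneg hF0 _)
  · have hSpos : 0 < S := lt_of_le_of_ne hS0 (Ne.symm hScase)
    have hX : 0 < S ^ ((2*q-2)/q) := Real.rpow_pos_of_pos hSpos _
    have hsplit : S ^ 2 = S ^ (2/q) * S ^ ((2*q-2)/q) := by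
      rw [← Real.rpow_natCast S 2, ← Real.rpow_add hSpos]
      congr 1
      push_cast
      field_simp
      ring
    have hkey : S ^ (2/q) ≤ (1+C) * F := by
      have h6 := hfin
      rw [hsplit] at h6
      exact le_of_mul_le_mul_right h6 hX
    have h7 : S ^ (1/q) ≤ ((1+C) * F) ^ ((1:ℝ)/2) := by
      have h5 : S ^ (1/q) = (S ^ (2/q)) ^ ((1:ℝ)/2) := by
        rw [← Real.rpow_mul hS0]
        congr 1
        ring
      rw [h5]
      exact Real.rpow_le_rpow (Real.rpow_nonneg hS0 _) hkey (by norm_num)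
    calc S ^ (1/q) ≤ ((1+C) * F) ^ ((1:ℝ)/2) := h7
      _ = Real.sqrt (1+C) * F ^ ((1:ℝ)/2) := by
          rw [Real.mul_rpow (by linarith) hF0, Real.sqrt_eq_rpow]
end

section
/- Let F be a prime field of order p, 0 < β ≤ α < n, let N be an integer with N^n ≈ p^{α−β/2} and 10nN ≤ p, and set A = {1,…,N}^n ⊆ F^n. Let E ⊆ F^n satisfy |E| ≈ p^α, |1̂_E(ξ)| ≤ C_n √|E| √(log p) for all ξ ≠ 0, and |E ∩ A| ≤ |A|/100. Define μ = (1_E + 1_A)/(|E| + |A|). Then μ is a probability measure on F^n satisfying μ(x) ≤ C·p^{−α} for all x, and |μ̂(ξ)| ≤ C·(p^{−α/2}√(log p) + p^{−β/2}) for all ξ ≠ 0, where C is independent of p. -/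
open Finset

/-- The measure `μ = (1_E + 1_A)/(|E| + |A|)`. -/
noncomputable def combMeasure (p n N : ℕ) (E : Finset (Fin n → ZMod p))
    (x : Fin n → ZMod p) : ℝ :=
  ((if x ∈ E then 1 else 0) + (if x ∈ cubeA p n N then 1 else 0)) /
    ((E.card : ℝ) + ((cubeA p n N).card : ℝ))

lemma norm_e_one (p : ℕ) (t : ZMod p) : ‖e p t‖ = 1 := by
  have h : e p t = Complex.exp (((2 * Real.pi * t.val / p : ℝ) : ℂ) * Complex.I) := by
    unfold e; push_cast; ring_nf
  rw [h, Complex.norm_exp_ofReal_mul_I]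

lemma dft_norm_le {p n : ℕ} [NeZero p] (f : (Fin n → ZMod p) → ℂ)
    (ξ : Fin n → ZMod p) : ‖dft f ξ‖ ≤ ∑ x, ‖f x‖ := by
  refine (norm_sum_le _ _).trans ?_
  refine Finset.sum_le_sum fun x _ => ?_
  rw [norm_mul, norm_e_one, one_mul]

lemma card_cubeA_le (p n N : ℕ) : ((cubeA p n N).card : ℝ) ≤ (N : ℝ) ^ n := by
  have h : (cubeA p n N).card ≤ N ^ n := by
    rw [cubeA, Fintype.card_piFinset]
    calc ∏ _i : Fin n, ((Finset.Icc 1 N).image (fun k : ℕ => (k : ZMod p))).card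
        ≤ ∏ _i : Fin n, N := by
          refine Finset.prod_le_prod' fun i _ => ?_
          exact (Finset.card_image_le).trans (by simp)
      _ = N ^ n := by simp
  exact_mod_cast h


set_option maxHeartbeats 1000000 in
/-- Construction of the measure: `μ = (1_E + 1_A)/(|E|+|A|)` is a probability
measure with `μ(x) ≤ C p^{-α}` and `|μ̂(ξ)| ≤ C (p^{-α/2}√(log p) + p^{-β/2})`
for `ξ ≠ 0`, with `C` independent of `p`. -/
theorem comb_measure_properties (n : ℕ) (α β c₁ c₂ c₃ c₄ Cn : ℝ)
    (hβ0 : 0 < β) (hβα : β ≤ α) (hαn : α < n)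
    (hc₁ : 0 < c₁) (hc₂ : 0 < c₂) (hc₃ : 0 < c₃) (hc₄ : 0 < c₄) (hCn : 0 < Cn) :
    ∃ C : ℝ, 0 < C ∧
      ∀ (p N : ℕ) [Fact p.Prime] (E : Finset (Fin n → ZMod p)),
        1 ≤ N → 10 * n * N ≤ p →
        c₁ * (p : ℝ) ^ (α - β / 2) ≤ (N : ℝ) ^ n →
        (N : ℝ) ^ n ≤ c₂ * (p : ℝ) ^ (α - β / 2) →
        c₃ * (p : ℝ) ^ α ≤ (E.card : ℝ) →
        (E.card : ℝ) ≤ c₄ * (p : ℝ) ^ α →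
        (∀ ξ : Fin n → ZMod p, ξ ≠ 0 →
            ‖dft (fun x => if x ∈ E then (1 : ℂ) else 0) ξ‖
              ≤ Cn * Real.sqrt E.card * Real.sqrt (Real.log p)) →
        ((E ∩ cubeA p n N).card : ℝ) ≤ ((cubeA p n N).card : ℝ) / 100 →
        (∀ x, 0 ≤ combMeasure p n N E x) ∧
        (∑ x, combMeasure p n N E x) = 1 ∧
        (∀ x, combMeasure p n N E x ≤ C * (p : ℝ) ^ (-α)) ∧
        (∀ ξ : Fin n → ZMod p, ξ ≠ 0 →
            ‖dft (fun x => (combMeasure p n N E x : ℂ)) ξ‖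
              ≤ C * ((p : ℝ) ^ (-α / 2) * Real.sqrt (Real.log p)
                      + (p : ℝ) ^ (-β / 2))) := by
  refine ⟨2 / c₃ + Cn / Real.sqrt c₃ + c₂ / c₃, by positivity, ?_⟩
  intro p N _inst E hN hpN hA1 hA2 hE1 hE2 hEf hEA
  have hp2 : (2 : ℝ) ≤ (p : ℝ) := by exact_mod_cast (Fact.out : p.Prime).two_le
  have hp0 : (0 : ℝ) < (p : ℝ) := by linarith
  have hpα : (0 : ℝ) < (p : ℝ) ^ α := Real.rpow_pos_of_pos hp0 α
  have hE0 : (0 : ℝ) < (E.card : ℝ) := lt_of_lt_of_le (by positivity) hE1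
  have hAn0 : (0 : ℝ) ≤ ((cubeA p n N).card : ℝ) := by positivity
  have hD0 : (0 : ℝ) < (E.card : ℝ) + ((cubeA p n N).card : ℝ) := by linarith
  have hAnle : ((cubeA p n N).card : ℝ) ≤ c₂ * (p : ℝ) ^ (α - β / 2) :=
    (card_cubeA_le p n N).trans hA2
  have hlogp : (0 : ℝ) ≤ Real.log p := Real.log_nonneg (by linarith)
  have hs0 : (0 : ℝ) ≤ Real.sqrt (Real.log p) := Real.sqrt_nonneg _
  -- sqrt of p^α
  have hsqrtpα : Real.sqrt ((p : ℝ) ^ α) = (p : ℝ) ^ (α / 2) := by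
    rw [show α / 2 = α * (1 / 2) by ring, Real.rpow_mul hp0.le, Real.sqrt_eq_rpow]
  have hsqrtE : Real.sqrt c₃ * (p : ℝ) ^ (α / 2) ≤ Real.sqrt (E.card : ℝ) := by
    rw [← hsqrtpα, ← Real.sqrt_mul hc₃.le]
    exact Real.sqrt_le_sqrt hE1
  refine ⟨?_, ?_, ?_, ?_⟩
  · intro x
    unfold combMeasure
    positivity
  · unfold combMeasure
    rw [← Finset.sum_div, Finset.sum_add_distrib]
    simp only [Finset.sum_ite_mem, Finset.univ_inter, Finset.sum_const,
      nsmul_eq_mul, mul_one]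
    exact div_self hD0.ne'
  · intro x
    have hpnα : (0 : ℝ) < (p : ℝ) ^ (-α) := Real.rpow_pos_of_pos hp0 _
    have h1 : combMeasure p n N E x ≤ 2 / (c₃ * (p : ℝ) ^ α) := by
      unfold combMeasure
      have hnum : ((if x ∈ E then (1:ℝ) else 0) + (if x ∈ cubeA p n N then 1 else 0)) ≤ 2 := by
        split <;> split <;> norm_num
      have hden : c₃ * (p : ℝ) ^ α ≤ (E.card : ℝ) + ((cubeA p n N).card : ℝ) := by linarith
      exact div_le_div₀ (by norm_num) hnum (by positivity) hden
    have h2 : 2 / (c₃ * (p : ℝ) ^ α) = (2 / c₃) * (p : ℝ) ^ (-α) := by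
      rw [Real.rpow_neg hp0.le]
      field_simp
    have h3 : (2 / c₃) * (p : ℝ) ^ (-α) ≤ (2 / c₃ + Cn / Real.sqrt c₃ + c₂ / c₃) * (p : ℝ) ^ (-α) := by
      have : (0:ℝ) ≤ Cn / Real.sqrt c₃ + c₂ / c₃ := by positivity
      nlinarith
    linarith [h1, h2 ▸ h1]
  · intro ξ hξ
    -- linearity of dft
    have hsplit : dft (fun x => (combMeasure p n N E x : ℂ)) ξ
        = (dft (fun x => if x ∈ E then (1:ℂ) else 0) ξ
            + dft (fun x => if x ∈ cubeA p n N then (1:ℂ) else 0) ξ)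
          / (((E.card : ℝ) + ((cubeA p n N).card : ℝ) : ℝ) : ℂ) := by
      unfold dft combMeasure
      rw [← Finset.sum_add_distrib, Finset.sum_div]
      refine Finset.sum_congr rfl fun x _ => ?_
      push_cast [apply_ite (Complex.ofReal)]
      ring
    have hnormA : ‖dft (fun x => if x ∈ cubeA p n N then (1:ℂ) else 0) ξ‖
        ≤ ((cubeA p n N).card : ℝ) := by
      refine (dft_norm_le _ _).trans ?_
      have : ∀ x : Fin n → ZMod p, ‖if x ∈ cubeA p n N then (1:ℂ) else 0‖
          = if x ∈ cubeA p n N then (1:ℝ) else 0 := by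
        intro x; split <;> simp
      rw [Finset.sum_congr rfl fun x _ => this x]
      simp [Finset.sum_ite_mem]
    have hnE : ‖dft (fun x => if x ∈ E then (1:ℂ) else 0) ξ‖
        ≤ Cn * Real.sqrt E.card * Real.sqrt (Real.log p) := hEf ξ hξ
    rw [hsplit]
    have hDc : ‖((((E.card : ℝ) + ((cubeA p n N).card : ℝ)) : ℝ) : ℂ)‖
        = (E.card : ℝ) + ((cubeA p n N).card : ℝ) := by
      rw [Complex.norm_real, Real.norm_of_nonneg hD0.le]
    rw [norm_div, hDc]
    have step1 : ‖dft (fun x => if x ∈ E then (1:ℂ) else 0) ξ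
            + dft (fun x => if x ∈ cubeA p n N then (1:ℂ) else 0) ξ‖
        ≤ Cn * Real.sqrt E.card * Real.sqrt (Real.log p) + ((cubeA p n N).card : ℝ) :=
      (norm_add_le _ _).trans (by linarith)
    have step2 : (Cn * Real.sqrt E.card * Real.sqrt (Real.log p) + ((cubeA p n N).card : ℝ))
          / ((E.card : ℝ) + ((cubeA p n N).card : ℝ))
        ≤ Cn * Real.sqrt E.card * Real.sqrt (Real.log p) / (E.card : ℝ)
          + ((cubeA p n N).card : ℝ) / (E.card : ℝ) := by
      rw [← add_div]
      apply div_le_div₀ (by positivity) le_rfl hE0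
      linarith
    -- first term
    have hsE : Real.sqrt (E.card : ℝ) * Real.sqrt (E.card : ℝ) = (E.card : ℝ) :=
      Real.mul_self_sqrt hE0.le
    have hsE0 : (0:ℝ) < Real.sqrt (E.card : ℝ) := Real.sqrt_pos.mpr hE0
    have t1 : Cn * Real.sqrt E.card * Real.sqrt (Real.log p) / (E.card : ℝ)
        = Cn * Real.sqrt (Real.log p) / Real.sqrt (E.card : ℝ) := by
      rw [div_eq_div_iff hE0.ne' hsE0.ne']
      linear_combination Cn * Real.sqrt (Real.log p) * hsE
    have hpα2 : (0:ℝ) < (p : ℝ) ^ (α / 2) := Real.rpow_pos_of_pos hp0 _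
    have t1le : Cn * Real.sqrt (Real.log p) / Real.sqrt (E.card : ℝ)
        ≤ (Cn / Real.sqrt c₃) * ((p : ℝ) ^ (-α / 2) * Real.sqrt (Real.log p)) := by
      have h : Cn * Real.sqrt (Real.log p) / Real.sqrt (E.card : ℝ)
          ≤ Cn * Real.sqrt (Real.log p) / (Real.sqrt c₃ * (p : ℝ) ^ (α / 2)) := by
        apply div_le_div₀ (by positivity) le_rfl (by positivity) hsqrtE
      refine h.trans (le_of_eq ?_)
      have h1 : Real.sqrt c₃ ≠ 0 := by positivity
      have h2 : (p : ℝ) ^ (α / 2) ≠ 0 := by positivity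
      rw [show (-α / 2 : ℝ) = -(α / 2) by ring, Real.rpow_neg hp0.le]
      field_simp
    -- second term
    have t2le : ((cubeA p n N).card : ℝ) / (E.card : ℝ) ≤ (c₂ / c₃) * (p : ℝ) ^ (-β / 2) := by
      have h : ((cubeA p n N).card : ℝ) / (E.card : ℝ)
          ≤ (c₂ * (p : ℝ) ^ (α - β / 2)) / (c₃ * (p : ℝ) ^ α) :=
        div_le_div₀ (by positivity) hAnle (by positivity) hE1
      refine h.trans (le_of_eq ?_)
      have h1 : (p : ℝ) ^ α ≠ 0 := hpα.ne'
      have h2 : (p : ℝ) ^ (β / 2) ≠ 0 := by positivity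
      rw [show (α - β / 2 : ℝ) = α - β / 2 from rfl, Real.rpow_sub hp0,
        show (-β / 2 : ℝ) = -(β / 2) by ring, Real.rpow_neg hp0.le]
      field_simp
    -- assemble
    have hcoef1 : Cn / Real.sqrt c₃ ≤ 2 / c₃ + Cn / Real.sqrt c₃ + c₂ / c₃ := by
      have h1 : (0:ℝ) ≤ 2 / c₃ := by positivity
      have h2 : (0:ℝ) ≤ c₂ / c₃ := by positivity
      linarith
    have hcoef2 : c₂ / c₃ ≤ 2 / c₃ + Cn / Real.sqrt c₃ + c₂ / c₃ := by
      have h1 : (0:ℝ) ≤ 2 / c₃ := by positivity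
      have h2 : (0:ℝ) ≤ Cn / Real.sqrt c₃ := by positivity
      linarith
    have hb1 : (0:ℝ) ≤ (p : ℝ) ^ (-α / 2) * Real.sqrt (Real.log p) := by positivity
    have hb2 : (0:ℝ) ≤ (p : ℝ) ^ (-β / 2) := by positivity
    calc ‖dft (fun x => if x ∈ E then (1:ℂ) else 0) ξ
            + dft (fun x => if x ∈ cubeA p n N then (1:ℂ) else 0) ξ‖
          / ((E.card : ℝ) + ((cubeA p n N).card : ℝ))
        ≤ (Cn * Real.sqrt E.card * Real.sqrt (Real.log p) + ((cubeA p n N).card : ℝ))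
          / ((E.card : ℝ) + ((cubeA p n N).card : ℝ)) :=
          div_le_div₀ (by positivity) step1 hD0 le_rfl
      _ ≤ (Cn / Real.sqrt c₃) * ((p : ℝ) ^ (-α / 2) * Real.sqrt (Real.log p))
          + (c₂ / c₃) * (p : ℝ) ^ (-β / 2) := by
          refine step2.trans ?_
          rw [t1]
          exact add_le_add t1le t2le
      _ ≤ (2 / c₃ + Cn / Real.sqrt c₃ + c₂ / c₃)
          * ((p : ℝ) ^ (-α / 2) * Real.sqrt (Real.log p) + (p : ℝ) ^ (-β / 2)) := by
          rw [mul_add]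
          exact add_le_add (mul_le_mul_of_nonneg_right hcoef1 hb1)
            (mul_le_mul_of_nonneg_right hcoef2 hb2)
end
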